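/- For every m ≥ 2 the 2-uniform-tree hypergraph H(m,m), whose vertices are the nodes of the complete m-ary tree of depth m−1, whose hyperedges are the m-element sets of children of each internal node (horizontal hyperedges) and the m-element vertex sets of root-to-leaf paths (vertical hyperedges), is not 2-colorable: every 2-coloring of its vertices yields a monochromatic hyperedge. -/
import Mathlib


/-- Vertices of the full `a`-ary tree whose root-to-leaf paths have `b` vertices:
lists over `Fin a` of length `< b` (the root is `[]`, leaves have length `b - 1`). -/
abbrev TreeV (a b : ℕ) := {l : List (Fin a) // l.length < b}

/-- The horizontal hyperedge of an internal node `p`: the set of its children. -/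
def horizontalEdge (a b : ℕ) (p : List (Fin a)) : Set (TreeV a b) :=
  {v | ∃ i : Fin a, v.val = p ++ [i]}

/-- The vertical hyperedge of a leaf: all vertices on the root-to-leaf path,
i.e., all prefixes of the leaf. -/
def verticalEdge (a b : ℕ) (leaf : List (Fin a)) : Set (TreeV a b) :=
  {v | v.val <+: leaf}

/-- The hyperedges of the hypergraph `H(a,b)`: the sets of children of internal
vertices and the vertex sets of root-to-leaf paths. -/
def Hedges (a b : ℕ) : Set (Set (TreeV a b)) :=
  {E | (∃ p : List (Fin a), p.length + 1 < b ∧ E = horizontalEdge a b p) ∨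
       (∃ l : List (Fin a), l.length = b - 1 ∧ E = verticalEdge a b l)}

/-- Coloring on plain lists (junk value `false` for too-long lists). -/
def dcol (m : ℕ) (c : TreeV m m → Bool) (p : List (Fin m)) : Bool :=
  if h : p.length < m then c ⟨p, h⟩ else false

lemma dcol_eq (m : ℕ) (c : TreeV m m → Bool) (v : TreeV m m) :
    dcol m c v.val = c v := by
  rw [dcol, dif_pos v.2]

lemma boolaux (a b t : Bool) (h : a ≠ b) (h2 : a ≠ t) : b = t := by
  cases a <;> cases b <;> cases t <;> simp_all

/-- If every internal node has a child colored like the root, we can extend any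
root-colored node to a leaf with the whole extension root-colored. -/
lemma extend (m : ℕ) (c : TreeV m m → Bool)
    (H : ∀ p : List (Fin m), p.length + 1 < m → ∃ i : Fin m,
      dcol m c (p ++ [i]) = dcol m c []) :
    ∀ k (p : List (Fin m)), p.length + k = m - 1 → dcol m c p = dcol m c [] →
      ∃ l : List (Fin m), l.length = m - 1 ∧ p <+: l ∧
        ∀ q, q <+: l → p <+: q → dcol m c q = dcol m c [] := by
  intro k
  induction k with
  | zero =>
    intro p hp hcp
    refine ⟨p, by omega, List.prefix_refl p, fun q hq hpq => ?_⟩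
    have : q = p := hq.eq_of_length (le_antisymm hq.length_le hpq.length_le)
    rw [this, hcp]
  | succ k ih =>
    intro p hp hcp
    have hlt : p.length + 1 < m := by omega
    obtain ⟨i, hi⟩ := H p hlt
    obtain ⟨l, hl, hpl, hq⟩ := ih (p ++ [i]) (by simp; omega) hi
    refine ⟨l, hl, (List.prefix_append p [i]).trans hpl, fun q hql hpq => ?_⟩
    rcases le_or_gt q.length p.length with hle | hgt
    · have : p = q := hpq.eq_of_length (le_antisymm hpq.length_le hle)
      rw [← this, hcp]
    · have hpiq : p ++ [i] <+: q := by
        apply List.prefix_of_prefix_length_le (hpl) hql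
        simp; omega
      exact hq q hql hpiq

theorem stmt3 (m : ℕ) (hm : 2 ≤ m) (c : TreeV m m → Bool) :
    ∃ E ∈ Hedges m m, ∃ col : Bool, ∀ v ∈ E, c v = col := by
  have hm0 : 0 < m := by omega
  by_cases H : ∃ p : List (Fin m), p.length + 1 < m ∧ ∀ i : Fin m,
      dcol m c (p ++ [i]) = dcol m c (p ++ [⟨0, hm0⟩])
  · obtain ⟨p, hp, hall⟩ := H
    refine ⟨horizontalEdge m m p, Or.inl ⟨p, hp, rfl⟩,
      dcol m c (p ++ [⟨0, hm0⟩]), ?_⟩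
    rintro v ⟨i, hv⟩
    rw [← dcol_eq m c v, hv]
    exact hall i
  · push_neg at H
    have H' : ∀ p : List (Fin m), p.length + 1 < m → ∃ i : Fin m,
        dcol m c (p ++ [i]) = dcol m c [] := by
      intro p hp
      by_cases h0 : dcol m c (p ++ [⟨0, hm0⟩]) = dcol m c []
      · exact ⟨⟨0, hm0⟩, h0⟩
      · obtain ⟨i, hi⟩ := H p hp
        exact ⟨i, boolaux _ _ _ (fun h => hi h.symm) h0⟩
    obtain ⟨l, hl, -, hq⟩ := extend m c H' (m - 1) [] (by simp) rfl
    refine ⟨verticalEdge m m l, Or.inr ⟨l, hl, rfl⟩, dcol m c [], ?_⟩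
    intro v hv
    rw [← dcol_eq m c v]
    exact hq v.val hv List.nil_prefix
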